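/- If B is a complex LLL-reduced basis with parameter δ (1/2 < δ ≤ 1) and α = 1/(δ - 1/2), then ‖b₁‖ ≤ α^{(n-1)/4} |det B|^{1/n}. -/

import Mathlib

/-- The `i`-th column of a complex matrix, as a vector of `ℂⁿ`. -/
noncomputable def col {n : ℕ} (B : Matrix (Fin n) (Fin n) ℂ) (i : Fin n) :
    EuclideanSpace ℂ (Fin n) :=
  (WithLp.equiv 2 (Fin n → ℂ)).symm (fun x => B x i)

/-- Gram-Schmidt orthogonalization of a family of vectors in ℂⁿ. -/
noncomputable def gso {n : ℕ} (b : Fin n → EuclideanSpace ℂ (Fin n)) :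
    Fin n → EuclideanSpace ℂ (Fin n) :=
  @InnerProductSpace.gramSchmidt ℂ _ _ _ _ (Fin n) _ _ (inferInstance : WellFoundedLT (Fin n)) b

/-- Gram-Schmidt coefficient μ_{i,j} = ⟨bᵢ, b̂ⱼ⟩ / ‖b̂ⱼ‖². -/
noncomputable def mu {n : ℕ} (b : Fin n → EuclideanSpace ℂ (Fin n)) (i j : Fin n) : ℂ :=
  (inner ℂ (gso b j) (b i) : ℂ) / ((‖gso b j‖ ^ 2 : ℝ) : ℂ)

/-- B is complex LLL-reduced with parameter δ: size-reduced plus the Lovász condition. -/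
def LLLReduced {n : ℕ} (δ : ℝ) (b : Fin n → EuclideanSpace ℂ (Fin n)) : Prop :=
  (∀ i j : Fin n, j < i → |(mu b i j).re| ≤ 1/2 ∧ |(mu b i j).im| ≤ 1/2) ∧
  (∀ i j : Fin n, j.val + 1 = i.val →
    ‖gso b i‖^2 ≥ (δ - ‖mu b i j‖ ^ 2) * ‖gso b j‖^2)

open Finset
open scoped Matrix

theorem stmt2 (n : ℕ) (hn : 0 < n) (δ : ℝ) (hδ1 : 1/2 < δ) (hδ2 : δ ≤ 1)
    (B : Matrix (Fin n) (Fin n) ℂ) (hdet : B.det ≠ 0)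
    (hLLL : LLLReduced δ (col B)) :
    ‖col B ⟨0, hn⟩‖ ≤
      (1 / (δ - 1/2)) ^ (((n : ℝ) - 1) / 4) * ‖B.det‖ ^ ((1 : ℝ) / n) := by
  classical
  set b := col B with hbdef
  have hg' : gso b = @InnerProductSpace.gramSchmidt ℂ _ _ _ _ (Fin n) _ _
      (inferInstance : WellFoundedLT (Fin n)) b := rfl
  set g := gso b with hgdef
  set G : Matrix (Fin n) (Fin n) ℂ := fun x i => g i x with hGdef
  set U : Matrix (Fin n) (Fin n) ℂ :=
    Matrix.of (fun j i => if j = i then 1 else if j < i then mu b i j else 0) with hUdef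
  -- B = G * U
  have hBGU : B = G * U := by
    ext x i
    have h := @InnerProductSpace.gramSchmidt_def'' ℂ _ _ _ _ (Fin n) _ _ (inferInstance : WellFoundedLT (Fin n)) b i
    rw [← hg'] at h
    have hbx : B x i = b i x := rfl
    have h2 : b i x = g i x + ∑ j ∈ Iio i, ((inner ℂ (g j) (b i) : ℂ) / (‖g j‖ : ℂ)^2) * g j x := by
      conv_lhs => rw [h]
      rw [PiLp.add_apply, WithLp.ofLp_sum, Finset.sum_apply]
      simp [PiLp.smul_apply, smul_eq_mul]
    rw [hbx, h2, Matrix.mul_apply]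
    have hsub : ∀ j ∈ (univ : Finset (Fin n)), j ∉ Finset.Iic i → G x j * U j i = 0 := by
      intro j _ hj
      simp only [Finset.mem_Iic, not_le] at hj
      have h1 : j ≠ i := ne_of_gt hj
      have h2 : ¬ j < i := not_lt_of_gt hj
      simp [hUdef, h1, h2]
    rw [← Finset.sum_subset (Finset.subset_univ (Finset.Iic i)) hsub]
    rw [← Finset.Iio_insert, Finset.sum_insert (by simp)]
    have hUii : U i i = 1 := by simp [hUdef]
    rw [hUii, mul_one]
    congr 1
    apply Finset.sum_congr rfl
    intro j hj
    rw [Finset.mem_Iio] at hj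
    have hUji : U j i = mu b i j := by simp [hUdef, ne_of_lt hj, hj]
    rw [hUji, mu, hgdef]
    push_cast
    ring
  -- det U = 1
  have hdetU : U.det = 1 := by
    rw [Matrix.det_of_upperTriangular]
    · apply Finset.prod_eq_one; intro i _; simp [hUdef]
    · intro i j hij
      simp only [id] at hij
      simp [hUdef, (ne_of_gt hij), not_lt_of_gt hij]
  have hdetBG : B.det = G.det := by rw [hBGU, Matrix.det_mul, hdetU, mul_one]
  -- Gram matrix is diagonal
  have hGram : Gᴴ * G = Matrix.diagonal (fun i => ((‖g i‖^2 : ℝ) : ℂ)) := by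
    ext i j
    rw [Matrix.mul_apply]
    have hinner : (inner ℂ (g i) (g j) : ℂ) = ∑ x, (starRingEnd ℂ) (g i x) * (g j x) := by
      rw [PiLp.inner_apply]; simp only [RCLike.inner_apply']
    have : ∑ x, Gᴴ i x * G x j = (inner ℂ (g i) (g j) : ℂ) := by
      rw [hinner]; apply Finset.sum_congr rfl; intro x _
      rw [Matrix.conjTranspose_apply]; simp [hGdef]
    rw [this]
    by_cases hij : i = j
    · subst hij
      rw [Matrix.diagonal_apply_eq, inner_self_eq_norm_sq_to_K]
      norm_cast
    · rw [Matrix.diagonal_apply_ne _ hij]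
      exact @InnerProductSpace.gramSchmidt_orthogonal ℂ _ _ _ _ (Fin n) _ _ (inferInstance : WellFoundedLT (Fin n)) b _ _ hij
  -- |det B|^2 = prod of squared norms
  have hprod : (‖B.det‖)^2 = ∏ i, ‖g i‖^2 := by
    have h1 : (Gᴴ * G).det = ((‖B.det‖)^2 : ℝ) := by
      rw [Matrix.det_mul, Matrix.det_conjTranspose, hdetBG]
      rw [Complex.star_def, mul_comm, Complex.mul_conj]
      rw [Complex.sq_norm]
    have h2 : (Gᴴ * G).det = ((∏ i, ‖g i‖^2 : ℝ) : ℂ) := by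
      rw [hGram, Matrix.det_diagonal]
      push_cast
      rfl
    have := h1.symm.trans h2
    exact_mod_cast this
  have hD : 0 < ‖B.det‖ := norm_pos_iff.mpr hdet
  have hgpos : ∀ i, 0 < ‖g i‖^2 := by
    intro i
    have hne : ∏ i, ‖g i‖^2 ≠ 0 := by rw [← hprod]; positivity
    have := Finset.prod_ne_zero_iff.mp hne i (Finset.mem_univ i)
    exact lt_of_le_of_ne (sq_nonneg _) (Ne.symm this)
  set α : ℝ := 1 / (δ - 1/2) with hαdef
  have hδ0 : 0 < δ - 1/2 := by linarith
  have hα0 : 0 < α := by positivity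
  -- size reduction bound
  have hmu : ∀ i j : Fin n, j < i → ‖mu b i j‖ ^ 2 ≤ 1/2 := by
    intro i j hji
    obtain ⟨h1, h2⟩ := hLLL.1 i j hji
    rw [Complex.sq_norm, Complex.normSq_apply]
    obtain ⟨ha, hb⟩ := abs_le.mp h1
    obtain ⟨hc, hd⟩ := abs_le.mp h2
    nlinarith [sq_nonneg ((mu b i j).re), sq_nonneg ((mu b i j).im)]
  -- step
  have hstep : ∀ j i : Fin n, j.val + 1 = i.val → ‖g j‖^2 ≤ α * ‖g i‖^2 := by
    intro j i hji
    have hlt : j < i := by rw [Fin.lt_def]; omega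
    have hLov := hLLL.2 i j hji
    have hmu' := hmu i j hlt
    have h1 : (δ - 1/2) * ‖g j‖^2 ≤ ‖g i‖^2 := by
      calc (δ - 1/2) * ‖g j‖^2 ≤ (δ - ‖mu b i j‖ ^ 2) * ‖g j‖^2 := by
            apply mul_le_mul_of_nonneg_right (by linarith) (sq_nonneg _)
        _ ≤ ‖g i‖^2 := hLov
    have hα1 : α * (δ - 1/2) = 1 := by
      rw [hαdef, one_div, inv_mul_cancel₀ hδ0.ne']
    calc ‖g j‖^2 = (α * (δ - 1/2)) * ‖g j‖^2 := by rw [hα1, one_mul]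
      _ = α * ((δ - 1/2) * ‖g j‖^2) := by ring
      _ ≤ α * ‖g i‖^2 := mul_le_mul_of_nonneg_left h1 (le_of_lt hα0)
  -- induction
  have hind : ∀ k (h : k < n), ‖g ⟨0, hn⟩‖^2 ≤ α^k * ‖g ⟨k, h⟩‖^2 := by
    intro k
    induction k with
    | zero => intro h; simp
    | succ m ih =>
      intro h
      have hm : m < n := by omega
      have := hstep ⟨m, hm⟩ ⟨m+1, h⟩ rfl
      calc ‖g ⟨0, hn⟩‖^2 ≤ α^m * ‖g ⟨m, hm⟩‖^2 := ih hm
        _ ≤ α^m * (α * ‖g ⟨m+1, h⟩‖^2) := mul_le_mul_of_nonneg_left this (by positivity)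
        _ = α^(m+1) * ‖g ⟨m+1, h⟩‖^2 := by ring
  have hind' : ∀ i : Fin n, ‖g ⟨0, hn⟩‖^2 ≤ α^(i.val) * ‖g i‖^2 := by
    intro i
    have := hind i.val i.isLt
    simpa using this
  -- b_0 = g_0
  have hb0 : b ⟨0, hn⟩ = g ⟨0, hn⟩ := by
    rw [hg', @InnerProductSpace.gramSchmidt_def ℂ _ _ _ _ (Fin n) _ _ (inferInstance : WellFoundedLT (Fin n)) b]
    have : Finset.Iio (⟨0, hn⟩ : Fin n) = ∅ := by
      apply Finset.eq_empty_of_forall_notMem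
      intro j hj
      rw [Finset.mem_Iio, Fin.lt_def] at hj
      simp at hj
    rw [this, Finset.sum_empty, sub_zero]
  set S : ℕ := ∑ i ∈ Finset.range n, i with hSdef
  have hS2 : S * 2 = n * (n - 1) := Finset.sum_range_id_mul_two n
  set P := ‖b ⟨0, hn⟩‖ with hPdef
  set D := ‖B.det‖ with hDdef
  have hP0 : 0 ≤ P := norm_nonneg _
  have hmain : P ^ (2 * n) ≤ α ^ S * D ^ 2 := by
    have h1 : P ^ (2 * n) = ∏ _i : Fin n, P^2 := by
      rw [Finset.prod_const, Finset.card_univ, Fintype.card_fin, ← pow_mul, mul_comm]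
    have h2 : ∀ i : Fin n, P^2 ≤ α^(i.val) * ‖g i‖^2 := by
      intro i; rw [hPdef, hb0]; exact hind' i
    calc P ^ (2 * n) = ∏ _i : Fin n, P^2 := h1
      _ ≤ ∏ i : Fin n, (α^(i.val) * ‖g i‖^2) := by
          apply Finset.prod_le_prod (fun i _ => sq_nonneg _) (fun i _ => h2 i)
      _ = (∏ i : Fin n, α^(i.val)) * ∏ i : Fin n, ‖g i‖^2 := Finset.prod_mul_distrib
      _ = α ^ S * D^2 := by
          rw [Finset.prod_pow_eq_pow_sum, ← hprod]
          congr 1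
          rw [hSdef, ← Fin.sum_univ_eq_sum_range (fun i => i) n]
  -- conclude
  have h2n : 2 * n ≠ 0 := by omega
  have hT0 : (0:ℝ) ≤ α ^ (((n : ℝ) - 1) / 4) * D ^ ((1 : ℝ) / n) := by positivity
  apply le_of_pow_le_pow_left₀ h2n hT0
  have hcast : ((S : ℝ)) = (((n:ℝ) - 1) / 4) * ((2 * n : ℕ) : ℝ) := by
    have : ((S:ℝ)) * 2 = (n:ℝ) * ((n:ℝ) - 1) := by
      have h := hS2
      have hn1 : ((n - 1 : ℕ) : ℝ) = (n:ℝ) - 1 := by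
        rw [Nat.cast_sub hn]; simp
      calc ((S:ℝ)) * 2 = ((S * 2 : ℕ) : ℝ) := by push_cast; ring
        _ = ((n * (n-1) : ℕ) : ℝ) := by rw [h]
        _ = (n:ℝ) * ((n:ℝ) - 1) := by push_cast [hn1]; ring
    push_cast
    linarith
  calc P ^ (2 * n) ≤ α ^ S * D ^ 2 := hmain
    _ = α ^ ((S:ℝ)) * D ^ ((2:ℕ):ℝ) := by
        rw [Real.rpow_natCast, Real.rpow_natCast]
    _ = (α ^ (((n : ℝ) - 1) / 4)) ^ (2 * n) * (D ^ ((1 : ℝ) / n)) ^ (2 * n) := by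
        rw [← Real.rpow_natCast (α ^ (((n : ℝ) - 1) / 4)) (2*n),
            ← Real.rpow_natCast (D ^ ((1 : ℝ) / n)) (2*n),
            ← Real.rpow_mul (le_of_lt hα0), ← Real.rpow_mul (le_of_lt hD)]
        congr 1
        · rw [← hcast]
        · congr 1
          push_cast
          field_simp
    _ = (α ^ (((n : ℝ) - 1) / 4) * D ^ ((1 : ℝ) / n)) ^ (2 * n) := (mul_pow _ _ _).symm
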